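/- For every real number t ≥ 1, we have 1 - (1 - 1/t)^t ≥ 1 - 1/e + 1/(32 t^2). -/

import Mathlib

open Real

-- exp y ≤ 1 + y + y²/2 + (2/9) y³ for 0 ≤ y ≤ 1
lemma aux_exp_cubic {y : ℝ} (h0 : 0 ≤ y) (h1 : y ≤ 1) :
    Real.exp y ≤ 1 + y + y^2/2 + (2/9) * y^3 := by
  have h := Real.exp_bound' h0 h1 (n := 3) (by norm_num)
  simp [Finset.sum_range_succ, Nat.factorial] at h
  nlinarith [h]

-- log(1-x) ≤ -x - x²/10 for 0 < x ≤ 2/3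
lemma aux_log {x : ℝ} (h0 : 0 < x) (h1 : x ≤ 2/3) :
    Real.log (1 - x) ≤ -x - x^2/10 := by
  have hx1 : (0:ℝ) < 1 - x := by linarith
  rw [Real.log_le_iff_le_exp hx1]
  set y : ℝ := x + x^2/10 with hy
  have hy0 : 0 ≤ y := by positivity
  have hxx : x^2 ≤ (2/3)*x := by nlinarith
  have hy1 : y ≤ 1 := by rw [hy]; linarith
  have hb := aux_exp_cubic hy0 hy1
  have hne : Real.exp y ≠ 0 := (Real.exp_pos y).ne'
  rw [show -x - x^2/10 = -y by ring, Real.exp_neg, inv_eq_one_div, le_div_iff₀ (Real.exp_pos y)]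
  calc (1 - x) * Real.exp y ≤ (1 - x) * (1 + y + y^2/2 + (2/9)*y^3) := by
        apply mul_le_mul_of_nonneg_left hb (by linarith)
    _ ≤ 1 := by rw [hy]; nlinarith [sq_nonneg x, sq_nonneg (x - 1/2), pow_pos h0 3, pow_pos h0 4]

lemma exp_one_lt3 : Real.exp 1 < 3 := lt_trans Real.exp_one_lt_d9 (by norm_num)

/-- For every real `t ≥ 1`, `1 - (1 - 1/t)^t ≥ 1 - 1/e + 1/(32 t^2)`. -/
theorem stmt_0 (t : ℝ) (ht : 1 ≤ t) :
    1 - (1 - 1/t) ^ t ≥ 1 - 1 / Real.exp 1 + 1 / (32 * t ^ 2) := by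
  have ht0 : (0:ℝ) < t := by linarith
  have he : (0:ℝ) < Real.exp 1 := Real.exp_pos 1
  have he3 : Real.exp 1 < 3 := exp_one_lt3
  -- suffices to show (1-1/t)^t ≤ 1/exp 1 - 1/(32 t²)
  suffices h : (1 - 1/t) ^ t ≤ 1 / Real.exp 1 - 1 / (32 * t ^ 2) by linarith
  rcases le_or_gt t (3/2) with hts | hts
  · -- 1 ≤ t ≤ 3/2 : base ≤ 1/3
    have hb0 : 0 ≤ 1 - 1/t := by
      have : 1/t ≤ 1 := by rw [div_le_one ht0]; exact ht
      linarith
    have hb1 : 1 - 1/t ≤ 1/3 := by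
      have : 2/3 ≤ 1/t := by rw [le_div_iff₀ ht0]; linarith
      linarith
    have hle : (1 - 1/t) ^ t ≤ 1 - 1/t := by
      rcases eq_or_lt_of_le hb0 with hb | hb
      · rw [← hb, Real.zero_rpow (ne_of_gt ht0)]
      · calc (1 - 1/t) ^ t ≤ (1 - 1/t) ^ (1:ℝ) :=
              Real.rpow_le_rpow_of_exponent_ge hb (by linarith) ht
          _ = 1 - 1/t := Real.rpow_one _
    have h32 : 1 / (32 * t^2) ≤ 1/32 := by
      apply div_le_div_of_nonneg_left (by norm_num) (by norm_num) ?_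
      nlinarith
    have h13 : (1:ℝ)/3 + 1/32 ≤ 1 / Real.exp 1 := by
      rw [le_div_iff₀ he]
      nlinarith [Real.exp_one_lt_d9]
    linarith
  · -- t > 3/2
    set x : ℝ := 1/t with hx
    have hx0 : 0 < x := by positivity
    have hx1 : x ≤ 2/3 := by rw [hx, div_le_iff₀ ht0]; linarith
    have hb0 : (0:ℝ) < 1 - x := by linarith
    have hlog := aux_log hx0 hx1
    have hrw : (1 - x) ^ t = Real.exp (Real.log (1 - x) * t) :=
      Real.rpow_def_of_pos hb0 t
    have hxt : x * t = 1 := by rw [hx]; field_simp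
    have step1 : (1 - x) ^ t ≤ Real.exp (-1 - 1/(10*t)) := by
      rw [hrw]
      apply Real.exp_le_exp.2
      have : Real.log (1 - x) * t ≤ (-x - x^2/10) * t :=
        mul_le_mul_of_nonneg_right hlog (le_of_lt ht0)
      have h2 : (-x - x^2/10) * t = -1 - 1/(10*t) := by
        rw [hx]; field_simp
      linarith [h2 ▸ this]
    -- now exp(-1 - s) ≤ 1/e - 1/(32 t²) with s = 1/(10t)
    set s : ℝ := 1/(10*t) with hs
    have hs0 : 0 < s := by positivity
    have hs15 : s ≤ 1/15 := by rw [hs, div_le_div_iff₀ (by positivity) (by norm_num)]; linarith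
    have hexps : Real.exp (-s) ≤ 1 - s + s^2 := by
      have h1 : s + 1 ≤ Real.exp s := Real.add_one_le_exp s
      have h2 : Real.exp (-s) = 1 / Real.exp s := by rw [Real.exp_neg]; rw [inv_eq_one_div]
      rw [h2, div_le_iff₀ (Real.exp_pos s)]
      nlinarith [Real.exp_pos s]
    have key : Real.exp (-1 - s) ≤ 1 / Real.exp 1 - 1/(32*t^2) := by
      have hsplit : Real.exp (-1 - s) = (1 / Real.exp 1) * Real.exp (-s) := by
        rw [show (-1 - s : ℝ) = -1 + -s by ring, Real.exp_add, Real.exp_neg 1, one_div]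
      rw [hsplit]
      have hinv3 : (1:ℝ)/3 ≤ 1 / Real.exp 1 := by
        rw [div_le_div_iff₀ (by norm_num) he]; linarith
      have hinv1 : 1 / Real.exp 1 ≤ 1 := by
        rw [div_le_one he]; nlinarith [Real.add_one_le_exp (1:ℝ)]
      have hts2 : 1/(32*t^2) = 25/8 * s^2 := by
        rw [hs]; field_simp; ring
      rw [hts2]
      nlinarith [Real.exp_pos (-s), mul_le_mul_of_nonneg_left hexps (by positivity : (0:ℝ) ≤ 1/Real.exp 1)]
    calc (1 - 1/t) ^ t = (1 - x) ^ t := by rw [hx]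
      _ ≤ Real.exp (-1 - 1/(10*t)) := step1
      _ ≤ 1 / Real.exp 1 - 1/(32*t^2) := by rw [← hs] at *; exact key
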